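/- For M i.i.d. samples s'_1,...,s'_M from the uniform distribution on [-u,u] and a fixed point c ∈ [-u,u], the expected minimum distance equals (u/(M+1))·(1 + (|c|/u)^{M+1}). -/

import Mathlib

open MeasureTheory ProbabilityTheory intervalIntegral

lemma piece1 (u a : ℝ) (hu : 0 < u) (M : ℕ) :
    ∫ t in (0:ℝ)..(u - a), ((u - t) / u) ^ M
      = (u ^ (M+1) - a ^ (M+1)) / ((M+1) * u ^ M) := by
  have h1 : ∀ t : ℝ, ((u - t) / u) ^ M = (u - t) ^ M / u ^ M := fun t => div_pow _ _ _
  simp_rw [h1, intervalIntegral.integral_div]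
  rw [intervalIntegral.integral_comp_sub_left (fun x => x ^ M) u]
  simp only [sub_sub_cancel, sub_zero]
  rw [integral_pow]
  have : (0:ℝ) < u ^ M := pow_pos hu M
  field_simp

lemma piece2 (u a : ℝ) (hu : 0 < u) (M : ℕ) :
    ∫ t in (u - a)..(u + a), ((u + a - t) / (2*u)) ^ M
      = (2*a) ^ (M+1) / ((M+1) * (2*u) ^ M) := by
  have h1 : ∀ t : ℝ, ((u + a - t) / (2*u)) ^ M = (u + a - t) ^ M / (2*u) ^ M :=
    fun t => div_pow _ _ _
  simp_rw [h1, intervalIntegral.integral_div]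
  rw [intervalIntegral.integral_comp_sub_left (fun x => x ^ M) (u + a)]
  have e1 : u + a - (u + a) = 0 := by ring
  have e2 : u + a - (u - a) = 2*a := by ring
  rw [e1, e2, integral_pow]
  have : (0:ℝ) < (2*u) ^ M := pow_pos (by linarith) M
  field_simp
  simp

lemma gcont (u a : ℝ) (M : ℕ) :
    Continuous (fun t : ℝ => ((max (u + a - t) 0 + max (u - a - t) 0) / (2*u)) ^ M) := by
  apply Continuous.pow
  apply Continuous.div_const
  exact ((continuous_const.sub continuous_id).max continuous_const).add
    ((continuous_const.sub continuous_id).max continuous_const)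

lemma key_integral (u a : ℝ) (hu : 0 < u) (ha : 0 ≤ a) (hau : a ≤ u) (M : ℕ) (hM : 0 < M) :
    ∫ t in Set.Ioi (0:ℝ), ((max (u + a - t) 0 + max (u - a - t) 0) / (2*u)) ^ M
      = (u / (M + 1)) * (1 + (a / u) ^ (M + 1)) := by
  set g : ℝ → ℝ := fun t => ((max (u + a - t) 0 + max (u - a - t) 0) / (2*u)) ^ M with hg
  have hcont := gcont u a M
  -- reduce to Ioc 0 (u+a)
  have hsplit : Set.Ioi (0:ℝ) = Set.Ioc (0:ℝ) (u+a) ∪ Set.Ioi (u+a) :=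
    (Set.Ioc_union_Ioi_eq_Ioi (by linarith)).symm
  have hdisj : Disjoint (Set.Ioc (0:ℝ) (u+a)) (Set.Ioi (u+a)) := by
    rw [Set.disjoint_left]; intro x hx hx'
    exact absurd hx.2 (not_le.mpr hx')
  have hzero : ∫ t in Set.Ioi (u+a), g t = 0 := by
    apply setIntegral_eq_zero_of_forall_eq_zero
    intro t ht
    have h1 : u + a - t ≤ 0 := by simp only [Set.mem_Ioi] at ht; linarith
    have h2 : u - a - t ≤ 0 := by simp only [Set.mem_Ioi] at ht; linarith
    simp only [hg, max_eq_right h1, max_eq_right h2]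
    simp [zero_pow hM.ne']
  have hint1 : IntegrableOn g (Set.Ioc (0:ℝ) (u+a)) volume :=
    hcont.integrableOn_Ioc
  have hint2 : IntegrableOn g (Set.Ioi (u+a)) volume := by
    apply (integrableOn_congr_fun ?_ measurableSet_Ioi).mpr (integrableOn_zero (s := Set.Ioi (u+a)))
    intro t ht
    have h1 : u + a - t ≤ 0 := by simp only [Set.mem_Ioi] at ht; linarith
    have h2 : u - a - t ≤ 0 := by simp only [Set.mem_Ioi] at ht; linarith
    simp only [hg, max_eq_right h1, max_eq_right h2]
    simp [zero_pow hM.ne']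
  rw [hsplit, setIntegral_union hdisj measurableSet_Ioi hint1 hint2, hzero, add_zero]
  rw [← intervalIntegral.integral_of_le (by linarith : (0:ℝ) ≤ u + a)]
  -- split at u - a
  have hii : ∀ x y : ℝ, IntervalIntegrable g volume x y := fun x y => hcont.intervalIntegrable x y
  rw [← intervalIntegral.integral_add_adjacent_intervals (b := u - a) (hii _ _) (hii _ _)]
  have e1 : ∫ t in (0:ℝ)..(u-a), g t = ∫ t in (0:ℝ)..(u-a), ((u - t)/u) ^ M := by
    apply intervalIntegral.integral_congr
    intro t ht
    rw [Set.uIcc_of_le (by linarith)] at ht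
    obtain ⟨ht1, ht2⟩ := ht
    have h1 : 0 ≤ u + a - t := by linarith
    have h2 : 0 ≤ u - a - t := by linarith
    simp only [hg, max_eq_left h1, max_eq_left h2]
    congr 1
    field_simp
    ring
  have e2 : ∫ t in (u-a)..(u+a), g t = ∫ t in (u-a)..(u+a), ((u + a - t)/(2*u)) ^ M := by
    apply intervalIntegral.integral_congr
    intro t ht
    rw [Set.uIcc_of_le (by linarith)] at ht
    obtain ⟨ht1, ht2⟩ := ht
    have h1 : 0 ≤ u + a - t := by linarith
    have h2 : u - a - t ≤ 0 := by linarith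
    simp only [hg, max_eq_left h1, max_eq_right h2, add_zero]
  rw [e1, e2, piece1 u a hu M, piece2 u a hu M]
  have hu' : (0:ℝ) < u ^ M := pow_pos hu M
  have hM1 : (0:ℝ) < (M:ℝ) + 1 := by positivity
  have h2a : (2*a) ^ (M+1) = 2 ^ (M+1) * a ^ (M+1) := mul_pow 2 a (M+1)
  have h2u : (2*u) ^ M = 2 ^ M * u ^ M := mul_pow 2 u M
  rw [h2a, h2u]
  have h2 : (0:ℝ) < 2 ^ M := by positivity
  have hu0 : u ≠ 0 := hu.ne'
  rw [div_pow]
  field_simp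
  ring

lemma ofReal_sup_zero (a : ℝ) : ENNReal.ofReal (a ⊔ 0) = ENNReal.ofReal a := by
  rcases le_total a 0 with h | h
  · rw [sup_eq_right.mpr h, ENNReal.ofReal_of_nonpos h, ENNReal.ofReal_zero]
  · rw [sup_eq_left.mpr h]

lemma uniform_tail {Ω : Type*} [MeasurableSpace Ω] (P : Measure Ω)
    (u c t : ℝ) (hu : 0 < u) (hc : |c| ≤ u) (ht : 0 < t)
    (s : Ω → ℝ) (hmeas : Measurable s)
    (hunif : Measure.map s P
      = (ENNReal.ofReal (2 * u))⁻¹ • volume.restrict (Set.Icc (-u) u)) :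
    P (s ⁻¹' {x | t < |c - x|})
      = ENNReal.ofReal ((max (u + c - t) 0 + max (u - c - t) 0) / (2*u)) := by
  obtain ⟨hc1, hc2⟩ := abs_le.mp hc
  have hS : MeasurableSet {x : ℝ | t < |c - x|} :=
    measurableSet_lt measurable_const (measurable_const.sub measurable_id).abs
  rw [← Measure.map_apply hmeas hS, hunif, Measure.smul_apply, smul_eq_mul,
    Measure.restrict_apply hS]
  have hset : {x : ℝ | t < |c - x|} ∩ Set.Icc (-u) u
      = Set.Ico (-u) (c - t) ∪ Set.Ioc (c + t) u := by
    ext x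
    simp only [Set.mem_inter_iff, Set.mem_setOf_eq, Set.mem_Icc, Set.mem_union,
      Set.mem_Ico, Set.mem_Ioc, lt_abs, lt_neg]
    constructor
    · rintro ⟨(h | h), hx1, hx2⟩
      · exact Or.inl ⟨hx1, by linarith⟩
      · exact Or.inr ⟨by linarith, hx2⟩
    · rintro (⟨h1, h2⟩ | ⟨h1, h2⟩)
      · exact ⟨Or.inl (by linarith), h1, by linarith⟩
      · exact ⟨Or.inr (by linarith), by linarith, h2⟩
  rw [hset, measure_union ?_ measurableSet_Ioc, Real.volume_Ico, Real.volume_Ioc]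
  · have h2u : (0:ℝ) < 2*u := by linarith
    have e1 : c - t - -u = u + c - t := by ring
    have e2 : u - (c + t) = u - c - t := by ring
    rw [e1, e2, ENNReal.ofReal_div_of_pos h2u,
      ENNReal.ofReal_add (le_max_right _ _) (le_max_right _ _),
      ofReal_sup_zero, ofReal_sup_zero, ENNReal.div_eq_inv_mul]
  · rw [Set.disjoint_left]
    rintro x ⟨_, hx⟩ ⟨hx', _⟩
    linarith


/-- Exact formula for the expected minimum distance of `M` i.i.d. uniform samples on
`[-u, u]` to a fixed point `c ∈ [-u, u]`:
`E[min_k |c - s'_k|] = (u/(M+1)) * (1 + (|c|/u)^(M+1))`. -/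
theorem expected_min_dist_eq
    {Ω : Type*} [MeasurableSpace Ω] (P : Measure Ω) [IsProbabilityMeasure P]
    (u c : ℝ) (hu : 0 < u) (hc : |c| ≤ u)
    (M : ℕ) (hM : 0 < M)
    (s' : Fin M → Ω → ℝ)
    (hmeas : ∀ k, Measurable (s' k))
    (hunif : ∀ k, Measure.map (s' k) P
      = (ENNReal.ofReal (2 * u))⁻¹ • volume.restrict (Set.Icc (-u) u))
    (hindep : iIndepFun s' P) :
    ∫ ω, (⨅ k : Fin M, |c - s' k ω|) ∂P
      = (u / (M + 1)) * (1 + (|c| / u) ^ (M + 1)) := by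
  haveI : Nonempty (Fin M) := Fin.pos_iff_nonempty.mp hM
  obtain ⟨hc1, hc2⟩ := abs_le.mp hc
  set f : Ω → ℝ := fun ω => ⨅ k : Fin M, |c - s' k ω| with hfdef
  have hfmeas : Measurable f := Measurable.iInf fun k => (measurable_const.sub (hmeas k)).abs
  have hfnn : ∀ ω, 0 ≤ f ω := fun ω => le_ciInf fun k => abs_nonneg _
  have hbddb : ∀ ω, BddBelow (Set.range fun k : Fin M => |c - s' k ω|) :=
    fun ω => Set.Finite.bddBelow (Set.finite_range _)
  -- a.e. bound
  have k0 : Fin M := ⟨0, hM⟩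
  have hae : ∀ᵐ ω ∂P, s' k0 ω ∈ Set.Icc (-u) u := by
    rw [ae_iff]
    have hms : MeasurableSet (Set.Icc (-u) u)ᶜ := measurableSet_Icc.compl
    have he : {ω | ¬ s' k0 ω ∈ Set.Icc (-u) u} = s' k0 ⁻¹' (Set.Icc (-u) u)ᶜ := rfl
    rw [he, ← Measure.map_apply (hmeas k0) hms, hunif k0]
    simp [Measure.restrict_apply hms]
  have hbnd : ∀ᵐ ω ∂P, ‖f ω‖ ≤ 2 * u := by
    filter_upwards [hae] with ω hω
    obtain ⟨h1, h2⟩ := hω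
    rw [Real.norm_eq_abs, abs_of_nonneg (hfnn ω)]
    calc f ω ≤ |c - s' k0 ω| := ciInf_le (hbddb ω) k0
      _ ≤ 2 * u := abs_le.mpr ⟨by linarith, by linarith⟩
  have hInt : Integrable f P := (integrable_const (2*u)).mono' hfmeas.aestronglyMeasurable hbnd
  rw [hInt.integral_eq_integral_meas_lt (Filter.Eventually.of_forall hfnn)]
  have htail : Set.EqOn (fun t => (P {a | t < f a}).toReal)
      (fun t => ((max (u + |c| - t) 0 + max (u - |c| - t) 0) / (2*u)) ^ M)
      (Set.Ioi 0) := by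
    intro t ht
    have ht' : 0 < t := ht
    have hset : {a | t < f a} = ⋂ k, s' k ⁻¹' {x | t < |c - x|} := by
      ext ω
      simp only [Set.mem_setOf_eq, Set.mem_iInter, Set.mem_preimage, hfdef]
      constructor
      · intro h i
        exact lt_of_lt_of_le h (ciInf_le (hbddb ω) i)
      · intro h
        obtain ⟨i, hi⟩ := exists_eq_ciInf_of_finite (f := fun k : Fin M => |c - s' k ω|)
        rw [← hi]
        exact h i
    have hS : MeasurableSet {x : ℝ | t < |c - x|} :=
      measurableSet_lt measurable_const (measurable_const.sub measurable_id).abs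
    have hprod : P {a | t < f a} = ∏ k : Fin M, P (s' k ⁻¹' {x | t < |c - x|}) := by
      rw [hset]
      exact hindep.meas_iInter fun k => ⟨{x | t < |c - x|}, hS, rfl⟩
    have hfac : ∀ k : Fin M, P (s' k ⁻¹' {x | t < |c - x|})
        = ENNReal.ofReal ((max (u + c - t) 0 + max (u - c - t) 0) / (2*u)) :=
      fun k => uniform_tail P u c t hu hc ht' (s' k) (hmeas k) (hunif k)
    have hsym : max (u + c - t) 0 + max (u - c - t) 0
        = max (u + |c| - t) 0 + max (u - |c| - t) 0 := by
      rcases abs_cases c with ⟨h, _⟩ | ⟨h, _⟩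
      · rw [h]
      · rw [h]; rw [add_comm]; ring_nf
    simp only [hprod, hfac, Finset.prod_const, Finset.card_univ, Fintype.card_fin]
    rw [ENNReal.toReal_pow, ENNReal.toReal_ofReal (by positivity), hsym]
  change ∫ t in Set.Ioi (0:ℝ), (P {a | t < f a}).toReal = _
  rw [setIntegral_congr_fun measurableSet_Ioi htail]
  exact key_integral u |c| hu (abs_nonneg c) hc M hM
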